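/- (Hamkins–Löwe buttons-and-switches theorem, as used in the paper.) Let W be a type with a preorder ≤ (a potentialist frame), with Kripke satisfaction taken with respect to ≤. Suppose that for every natural number n there are a world w₀ⁿ ∈ W and a family Fₙ consisting of n buttons and n switches that is independent at w₀ⁿ. Let φ be a modal formula such that for every n and every valuation V assigning to each atomic proposition a pointwise (finite) Boolean combination of the members of Fₙ, φ is satisfied at every world of W. Then φ belongs to S4.2. -/

import Mathlib

/-- Propositional modal formulas: atoms, falsum, implication, and box. -/
inductive ModalFormula : Type
  | atom : ℕ → ModalFormula
  | falsum : ModalFormula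
  | imp : ModalFormula → ModalFormula → ModalFormula
  | box : ModalFormula → ModalFormula

/-- Kripke satisfaction at a world, relative to a frame relation `R` and a
valuation `V`. -/
def ModalSat {W : Type*} (R : W → W → Prop) (V : ℕ → W → Prop) :
    W → ModalFormula → Prop
  | w, .atom n => V n w
  | _, .falsum => False
  | w, .imp φ ψ => ModalSat R V w φ → ModalSat R V w ψ
  | w, .box φ => ∀ v, R w v → ModalSat R V v φ

/-- A formula is valid on the frame `(W, R)` if it is satisfied at every world
under every valuation. -/
def ValidOn {W : Type*} (R : W → W → Prop) (φ : ModalFormula) : Prop :=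
  ∀ (V : ℕ → W → Prop) (w : W), ModalSat R V w φ

/-- `φ` is a substitution instance of a classical propositional tautology:
it evaluates to `true` under every Boolean evaluation of formulas that
respects falsum and implication (atoms and boxed formulas may be evaluated
arbitrarily). -/
def TautologyInstance (φ : ModalFormula) : Prop :=
  ∀ e : ModalFormula → Bool,
    e .falsum = false →
    (∀ ψ χ, e (.imp ψ χ) = (!(e ψ) || e χ)) →
    e φ = true


namespace ModalFormula
/-- Negation: `¬φ := φ → ⊥`. -/
def neg (φ : ModalFormula) : ModalFormula := .imp φ .falsum
/-- Possibility: `◇φ := ¬□¬φ`. -/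
def dia (φ : ModalFormula) : ModalFormula := neg (.box (neg φ))
/-- Conjunction, defined classically from `→` and `⊥`. -/
def conj (φ ψ : ModalFormula) : ModalFormula := neg (.imp φ (neg ψ))
/-- Disjunction, defined classically from `→` and `⊥`. -/
def disj (φ ψ : ModalFormula) : ModalFormula := .imp (neg φ) ψ
end ModalFormula
/-- The modal logic S4.2: S4 together with all instances of
`.2 : ◇□φ → □◇φ`. -/
inductive S4Point2 : ModalFormula → Prop
  | taut {φ} : TautologyInstance φ → S4Point2 φ
  | axK (φ ψ) : S4Point2 (.imp (.box (.imp φ ψ)) (.imp (.box φ) (.box ψ)))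
  | axT (φ) : S4Point2 (.imp (.box φ) φ)
  | ax4 (φ) : S4Point2 (.imp (.box φ) (.box (.box φ)))
  | ax2 (φ) : S4Point2 (.imp (.dia (.box φ)) (.box (.dia φ)))
  | mp {φ ψ} : S4Point2 (.imp φ ψ) → S4Point2 φ → S4Point2 ψ
  | nec {φ} : S4Point2 φ → S4Point2 (.box φ)

namespace HL
open ModalFormula

abbrev Frm := ModalFormula

local notation "⊥'" => ModalFormula.falsum

-- basic propositional tautologies
lemma prv_imp_intro {a b : Frm} (h : S4Point2 b) : S4Point2 (a.imp b) := by
  refine S4Point2.mp (S4Point2.taut ?_) h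
  intro e h0 h1; simp only [h1, h0]; cases e a <;> cases e b <;> rfl

lemma prv_trans {a b c : Frm} (h1 : S4Point2 (a.imp b)) (h2 : S4Point2 (b.imp c)) :
    S4Point2 (a.imp c) := by
  have t : S4Point2 ((a.imp b).imp ((b.imp c).imp (a.imp c))) := by
    apply S4Point2.taut; intro e h0 h1; simp only [h1, h0]
    cases e a <;> cases e b <;> cases e c <;> rfl
  exact S4Point2.mp (S4Point2.mp t h1) h2

lemma prv_and_left (a b : Frm) : S4Point2 ((a.conj b).imp a) := by
  apply S4Point2.taut; intro e h0 h1
  simp only [ModalFormula.conj, ModalFormula.neg, h1, h0]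
  cases e a <;> cases e b <;> rfl

lemma prv_and_right (a b : Frm) : S4Point2 ((a.conj b).imp b) := by
  apply S4Point2.taut; intro e h0 h1
  simp only [ModalFormula.conj, ModalFormula.neg, h1, h0]
  cases e a <;> cases e b <;> rfl

lemma prv_and_intro {c a b : Frm} (h1 : S4Point2 (c.imp a)) (h2 : S4Point2 (c.imp b)) :
    S4Point2 (c.imp (a.conj b)) := by
  have t : S4Point2 ((c.imp a).imp ((c.imp b).imp (c.imp (a.conj b)))) := by
    apply S4Point2.taut; intro e h0 h1
    simp only [ModalFormula.conj, ModalFormula.neg, h1, h0]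
    cases e a <;> cases e b <;> cases e c <;> rfl
  exact S4Point2.mp (S4Point2.mp t h1) h2

lemma prv_top : S4Point2 (ModalFormula.neg ⊥') := by
  apply S4Point2.taut; intro e h0 h1
  simp only [ModalFormula.neg, h1, h0]; rfl

lemma prv_ax_s {a b c : Frm} (h1 : S4Point2 (a.imp (b.imp c))) (h2 : S4Point2 (a.imp b)) :
    S4Point2 (a.imp c) := by
  have t : S4Point2 ((a.imp (b.imp c)).imp ((a.imp b).imp (a.imp c))) := by
    apply S4Point2.taut; intro e h0 h1
    simp only [h1, h0]; cases e a <;> cases e b <;> cases e c <;> rfl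
  exact S4Point2.mp (S4Point2.mp t h1) h2

lemma prv_export {a b c : Frm} (h : S4Point2 ((a.conj b).imp c)) :
    S4Point2 (b.imp (a.imp c)) := by
  have t : S4Point2 (((a.conj b).imp c).imp (b.imp (a.imp c))) := by
    apply S4Point2.taut; intro e h0 h1
    simp only [ModalFormula.conj, ModalFormula.neg, h1, h0]
    cases e a <;> cases e b <;> cases e c <;> rfl
  exact S4Point2.mp t h

lemma prv_dne (a : Frm) : S4Point2 ((ModalFormula.neg (ModalFormula.neg a)).imp a) := by
  apply S4Point2.taut; intro e h0 h1
  simp only [ModalFormula.neg, h1, h0]; cases e a <;> rfl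

lemma prv_dni (a : Frm) : S4Point2 (a.imp (ModalFormula.neg (ModalFormula.neg a))) := by
  apply S4Point2.taut; intro e h0 h1
  simp only [ModalFormula.neg, h1, h0]; cases e a <;> rfl

lemma prv_contra {a b : Frm} (h : S4Point2 (a.imp b)) :
    S4Point2 ((ModalFormula.neg b).imp (ModalFormula.neg a)) := by
  have t : S4Point2 ((a.imp b).imp ((ModalFormula.neg b).imp (ModalFormula.neg a))) := by
    apply S4Point2.taut; intro e h0 h1
    simp only [ModalFormula.neg, h1, h0]; cases e a <;> cases e b <;> rfl
  exact S4Point2.mp t h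

-- modal derived rules
lemma box_mono {a b : Frm} (h : S4Point2 (a.imp b)) :
    S4Point2 ((ModalFormula.box a).imp (ModalFormula.box b)) :=
  S4Point2.mp (S4Point2.axK a b) (S4Point2.nec h)

lemma box_conj (a b : Frm) :
    S4Point2 (((ModalFormula.box a).conj (ModalFormula.box b)).imp
      (ModalFormula.box (a.conj b))) := by
  have h1 : S4Point2 (a.imp (b.imp (a.conj b))) := by
    apply S4Point2.taut; intro e h0 h1
    simp only [ModalFormula.conj, ModalFormula.neg, h1, h0]
    cases e a <;> cases e b <;> rfl
  have h2 : S4Point2 ((ModalFormula.box a).imp (ModalFormula.box (b.imp (a.conj b)))) :=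
    box_mono h1
  have h3 : S4Point2 ((ModalFormula.box a).imp
      ((ModalFormula.box b).imp (ModalFormula.box (a.conj b)))) :=
    prv_trans h2 (S4Point2.axK _ _)
  -- import: (x → (y → z)) → (x ∧ y → z)
  have t : S4Point2 (((ModalFormula.box a).imp
      ((ModalFormula.box b).imp (ModalFormula.box (a.conj b)))).imp
      ((((ModalFormula.box a).conj (ModalFormula.box b))).imp (ModalFormula.box (a.conj b)))) := by
    apply S4Point2.taut; intro e h0 h1
    simp only [ModalFormula.conj, ModalFormula.neg, h1, h0]
    cases e (ModalFormula.box a) <;> cases e (ModalFormula.box b) <;>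
      cases e (((a.imp (b.imp ModalFormula.falsum)).imp ModalFormula.falsum).box) <;> rfl
  exact S4Point2.mp t h3

lemma dia_mono {a b : Frm} (h : S4Point2 (a.imp b)) :
    S4Point2 (a.dia.imp b.dia) := by
  have h1 : S4Point2 (b.neg.imp a.neg) := prv_contra h
  have h2 := box_mono h1
  exact prv_contra h2

-- list conjunctions
def conjL : List Frm → Frm
  | [] => ModalFormula.neg ⊥'
  | χ :: L => χ.conj (conjL L)

lemma conjL_mem {χ : Frm} : ∀ {L : List Frm}, χ ∈ L → S4Point2 ((conjL L).imp χ)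
  | [], h => by cases h
  | ψ :: L, h => by
    rcases List.mem_cons.1 h with h | h
    · subst h; exact prv_and_left _ _
    · exact prv_trans (prv_and_right _ _) (conjL_mem h)

lemma imp_conjL {A : Frm} : ∀ {L : List Frm}, (∀ χ ∈ L, S4Point2 (A.imp χ)) →
    S4Point2 (A.imp (conjL L))
  | [], _ => prv_imp_intro prv_top
  | ψ :: L, h => prv_and_intro (h ψ (by simp)) (imp_conjL fun χ hx => h χ (by simp [hx]))

lemma conjL_sub {L L' : List Frm} (h : ∀ χ ∈ L', χ ∈ L) :
    S4Point2 ((conjL L).imp (conjL L')) :=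
  imp_conjL fun χ hx => conjL_mem (h χ hx)

lemma conjL_cover {ψ : Frm} {L L' : List Frm} (h : ∀ χ ∈ L, χ = ψ ∨ χ ∈ L') :
    S4Point2 ((ψ.conj (conjL L')).imp (conjL L)) := by
  refine imp_conjL fun χ hx => ?_
  rcases h χ hx with h | h
  · subst h; exact prv_and_left _ _
  · exact prv_trans (prv_and_right _ _) (conjL_mem h)

lemma conjL_cover2 {L L₁ L₂ : List Frm} (h : ∀ χ ∈ L, χ ∈ L₁ ∨ χ ∈ L₂) :
    S4Point2 (((conjL L₁).conj (conjL L₂)).imp (conjL L)) := by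
  refine imp_conjL fun χ hx => ?_
  rcases h χ hx with h | h
  · exact prv_trans (prv_and_left _ _) (conjL_mem h)
  · exact prv_trans (prv_and_right _ _) (conjL_mem h)

lemma boxedL : ∀ {L : List Frm}, (∀ χ ∈ L, ∃ ρ, χ = ModalFormula.box ρ) →
    S4Point2 ((conjL L).imp (ModalFormula.box (conjL L)))
  | [], _ => prv_imp_intro (S4Point2.nec prv_top)
  | ψ :: L, h => by
    obtain ⟨ρ, hρ⟩ := h ψ (by simp)
    subst hρ
    have IH := boxedL (L := L) fun χ hx => h χ (by simp [hx])
    have h1 : S4Point2 ((conjL (ModalFormula.box ρ :: L)).imp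
        ((ModalFormula.box (ModalFormula.box ρ)).conj (ModalFormula.box (conjL L)))) :=
      prv_and_intro (prv_trans (prv_and_left _ _) (S4Point2.ax4 ρ))
        (prv_trans (prv_and_right _ _) IH)
    exact prv_trans h1 (box_conj _ _)

end HL
namespace HL
open ModalFormula

/-- Derivability from a set of hypotheses. -/
def Sdrv (Γ : Set Frm) (ψ : Frm) : Prop :=
  ∃ L : List Frm, (∀ χ ∈ L, χ ∈ Γ) ∧ S4Point2 ((conjL L).imp ψ)

lemma Sdrv.ofMem {Γ : Set Frm} {ψ : Frm} (h : ψ ∈ Γ) : Sdrv Γ ψ :=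
  ⟨[ψ], by simpa using h, prv_and_left _ _⟩

lemma Sdrv.ofPrv {Γ : Set Frm} {ψ : Frm} (h : S4Point2 ψ) : Sdrv Γ ψ :=
  ⟨[], by simp, prv_imp_intro h⟩

lemma Sdrv.mono {Γ Δ : Set Frm} {ψ : Frm} (h : Sdrv Γ ψ) (hs : Γ ⊆ Δ) : Sdrv Δ ψ := by
  obtain ⟨L, hL, hp⟩ := h; exact ⟨L, fun χ hx => hs (hL χ hx), hp⟩

lemma Sdrv.mp {Γ : Set Frm} {ψ ρ : Frm} (h1 : Sdrv Γ (ψ.imp ρ)) (h2 : Sdrv Γ ψ) :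
    Sdrv Γ ρ := by
  obtain ⟨L₁, hL₁, hp₁⟩ := h1
  obtain ⟨L₂, hL₂, hp₂⟩ := h2
  refine ⟨L₁ ++ L₂, ?_, ?_⟩
  · intro χ hx; rcases List.mem_append.1 hx with h | h
    · exact hL₁ χ h
    · exact hL₂ χ h
  · have e1 : S4Point2 ((conjL (L₁ ++ L₂)).imp (ψ.imp ρ)) :=
      prv_trans (conjL_sub fun χ hx => List.mem_append_left _ hx) hp₁
    have e2 : S4Point2 ((conjL (L₁ ++ L₂)).imp ψ) :=
      prv_trans (conjL_sub fun χ hx => List.mem_append_right _ hx) hp₂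
    exact prv_ax_s e1 e2

/-- extract the part of a list not equal to ψ -/
lemma extract {ψ : Frm} {Γ : Set Frm} (L : List Frm) (h : ∀ χ ∈ L, χ = ψ ∨ χ ∈ Γ) :
    ∃ L' : List Frm, (∀ χ ∈ L', χ ∈ Γ) ∧ ∀ χ ∈ L, χ = ψ ∨ χ ∈ L' := by
  induction L with
  | nil => exact ⟨[], by simp, by simp⟩
  | cons χ₀ L IH =>
    obtain ⟨L', hL', hc⟩ := IH (fun χ hx => h χ (by simp [hx]))
    rcases h χ₀ (by simp) with h0 | h0
    · refine ⟨L', hL', ?_⟩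
      intro χ hx; rcases List.mem_cons.1 hx with rfl | hx
      · exact Or.inl h0
      · exact hc χ hx
    · refine ⟨χ₀ :: L', ?_, ?_⟩
      · intro χ hx; rcases List.mem_cons.1 hx with rfl | hx
        · exact h0
        · exact hL' χ hx
      · intro χ hx; rcases List.mem_cons.1 hx with rfl | hx
        · exact Or.inr (by simp)
        · rcases hc χ hx with h | h
          · exact Or.inl h
          · exact Or.inr (by simp [h])

lemma extract2 {A B : Set Frm} (L : List Frm) (h : ∀ χ ∈ L, χ ∈ A ∨ χ ∈ B) :
    ∃ L₁ L₂ : List Frm, (∀ χ ∈ L₁, χ ∈ A) ∧ (∀ χ ∈ L₂, χ ∈ B) ∧ ∀ χ ∈ L, χ ∈ L₁ ∨ χ ∈ L₂ := by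
  induction L with
  | nil => exact ⟨[], [], by simp, by simp, by simp⟩
  | cons χ₀ L IH =>
    obtain ⟨L₁, L₂, h1, h2, hc⟩ := IH (fun χ hx => h χ (by simp [hx]))
    rcases h χ₀ (by simp) with h0 | h0
    · refine ⟨χ₀ :: L₁, L₂, ?_, h2, ?_⟩
      · intro χ hx; rcases List.mem_cons.1 hx with rfl | hx
        · exact h0
        · exact h1 χ hx
      · intro χ hx; rcases List.mem_cons.1 hx with rfl | hx
        · exact Or.inl (by simp)
        · rcases hc χ hx with h | h
          · exact Or.inl (by simp [h])
          · exact Or.inr h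
    · refine ⟨L₁, χ₀ :: L₂, h1, ?_, ?_⟩
      · intro χ hx; rcases List.mem_cons.1 hx with rfl | hx
        · exact h0
        · exact h2 χ hx
      · intro χ hx; rcases List.mem_cons.1 hx with rfl | hx
        · exact Or.inr (by simp)
        · rcases hc χ hx with h | h
          · exact Or.inl h
          · exact Or.inr (by simp [h])

lemma Sdrv.deduction {Γ : Set Frm} {ψ ρ : Frm} (h : Sdrv (insert ψ Γ) ρ) :
    Sdrv Γ (ψ.imp ρ) := by
  obtain ⟨L, hL, hp⟩ := h
  obtain ⟨L', hL', hc⟩ := extract L (fun χ hx => by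
    rcases hL χ hx with h | h
    · exact Or.inl h
    · exact Or.inr h)
  refine ⟨L', hL', ?_⟩
  exact prv_export (prv_trans (conjL_cover hc) hp)

/-- Consistency of a set. -/
def Con (Γ : Set Frm) : Prop := ¬ Sdrv Γ ModalFormula.falsum

/-- Maximal consistent set. -/
def MCSet (Γ : Set Frm) : Prop := Con Γ ∧ ∀ ψ, Con (insert ψ Γ) → ψ ∈ Γ

lemma MCSet.mem_of_sdrv {Γ : Set Frm} (hΓ : MCSet Γ) {ψ : Frm} (h : Sdrv Γ ψ) : ψ ∈ Γ := by
  refine hΓ.2 ψ (fun hf => hΓ.1 ?_)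
  exact (Sdrv.deduction hf).mp h

lemma MCSet.mem_of_prv {Γ : Set Frm} (hΓ : MCSet Γ) {ψ : Frm} (h : S4Point2 ψ) : ψ ∈ Γ :=
  hΓ.mem_of_sdrv (Sdrv.ofPrv h)

lemma MCSet.mem_imp {Γ : Set Frm} (hΓ : MCSet Γ) {ψ χ : Frm}
    (h : ψ.imp χ ∈ Γ) (h2 : ψ ∈ Γ) : χ ∈ Γ :=
  hΓ.mem_of_sdrv ((Sdrv.ofMem h).mp (Sdrv.ofMem h2))

lemma MCSet.mem_prv_imp {Γ : Set Frm} (hΓ : MCSet Γ) {ψ χ : Frm}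
    (h : S4Point2 (ψ.imp χ)) (h2 : ψ ∈ Γ) : χ ∈ Γ :=
  hΓ.mem_of_sdrv ((Sdrv.ofPrv h).mp (Sdrv.ofMem h2))

lemma MCSet.neg_mem {Γ : Set Frm} (hΓ : MCSet Γ) {ψ : Frm} (h : ψ ∉ Γ) :
    ψ.neg ∈ Γ := by
  refine hΓ.2 _ (fun hf => h ?_)
  have h1 : Sdrv Γ (ψ.neg.imp ModalFormula.falsum) := Sdrv.deduction hf
  have h2 : S4Point2 ((ψ.neg.imp ModalFormula.falsum).imp ψ) := prv_dne ψ
  exact hΓ.mem_of_sdrv ((Sdrv.ofPrv h2).mp h1)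

lemma MCSet.not_both {Γ : Set Frm} (hΓ : MCSet Γ) {ψ : Frm}
    (h1 : ψ ∈ Γ) (h2 : ψ.neg ∈ Γ) : False := by
  refine hΓ.1 ?_
  have : Sdrv Γ (ψ.imp ModalFormula.falsum) := Sdrv.ofMem h2
  exact this.mp (Sdrv.ofMem h1)

lemma MCSet.falsum_not_mem {Γ : Set Frm} (hΓ : MCSet Γ) : ModalFormula.falsum ∉ Γ :=
  fun h => hΓ.1 (Sdrv.ofMem h)

lemma MCSet.mem_imp_iff {Γ : Set Frm} (hΓ : MCSet Γ) {ψ χ : Frm} :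
    ψ.imp χ ∈ Γ ↔ (ψ ∈ Γ → χ ∈ Γ) := by
  constructor
  · exact fun h h2 => hΓ.mem_imp h h2
  · intro h
    by_cases hψ : ψ ∈ Γ
    · have := h hψ
      refine hΓ.mem_prv_imp ?_ this
      apply S4Point2.taut; intro e h0 h1; simp only [h1, h0]
      cases e ψ <;> cases e χ <;> rfl
    · have := hΓ.neg_mem hψ
      refine hΓ.mem_prv_imp ?_ this
      apply S4Point2.taut; intro e h0 h1
      simp only [ModalFormula.neg, h1, h0]
      cases e ψ <;> cases e χ <;> rfl

/-- Lindenbaum's lemma. -/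
lemma lindenbaum {Γ : Set Frm} (h : Con Γ) : ∃ Δ, Γ ⊆ Δ ∧ MCSet Δ := by
  have hz := zorn_subset_nonempty {Δ : Set Frm | Γ ⊆ Δ ∧ Con Δ} ?_ Γ ⟨subset_rfl, h⟩
  · obtain ⟨m, hm, hmax⟩ := hz
    refine ⟨m, hm, hmax.prop.2, fun ψ hψ => ?_⟩
    have : insert ψ m ∈ {Δ : Set Frm | Γ ⊆ Δ ∧ Con Δ} :=
      ⟨hmax.prop.1.trans (Set.subset_insert _ _), hψ⟩
    have := hmax.le_of_ge this (Set.subset_insert _ _)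
    exact this (Set.mem_insert _ _)
  · intro c hc hchain hne
    obtain ⟨Δ₀, hΔ₀⟩ := hne
    refine ⟨⋃₀ c, ⟨(hc hΔ₀).1.trans (Set.subset_sUnion_of_mem hΔ₀), ?_⟩,
      fun s hs => Set.subset_sUnion_of_mem hs⟩
    rintro ⟨L, hL, hp⟩
    -- find a single member of the chain containing all of L
    have : ∃ Δ ∈ c, ∀ χ ∈ L, χ ∈ Δ := by
      clear hp
      induction L with
      | nil => exact ⟨Δ₀, hΔ₀, by simp⟩
      | cons χ₀ L IH =>
        obtain ⟨Δ₁, hΔ₁, h1⟩ := IH (fun χ hx => hL χ (by simp [hx]))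
        obtain ⟨Δ₂, hΔ₂, h2⟩ := Set.mem_sUnion.1 (hL χ₀ (by simp))
        by_cases heq : Δ₁ = Δ₂
        · exact ⟨Δ₂, hΔ₂, by
            intro χ hx; rcases List.mem_cons.1 hx with rfl | hx
            · exact h2
            · exact heq ▸ h1 χ hx⟩
        · rcases hchain hΔ₁ hΔ₂ heq with hle | hle
          · exact ⟨Δ₂, hΔ₂, by
              intro χ hx; rcases List.mem_cons.1 hx with rfl | hx
              · exact h2
              · exact hle (h1 χ hx)⟩
          · exact ⟨Δ₁, hΔ₁, by
              intro χ hx; rcases List.mem_cons.1 hx with rfl | hx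
              · exact hle h2
              · exact h1 χ hx⟩
    obtain ⟨Δ, hΔc, hall⟩ := this
    exact (hc hΔc).2 ⟨L, hall, hp⟩

end HL
namespace HL
open ModalFormula

def boxset (Γ : Set Frm) : Set Frm := {θ | ∃ χ, θ = ModalFormula.box χ ∧ θ ∈ Γ}

lemma box_witness {Γ : Set Frm} (hΓ : MCSet Γ) {ψ : Frm} (h : ModalFormula.box ψ ∉ Γ) :
    ∃ Δ, MCSet Δ ∧ (∀ χ, ModalFormula.box χ ∈ Γ → ModalFormula.box χ ∈ Δ) ∧ ψ.neg ∈ Δ := by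
  have hx : Con (insert ψ.neg (boxset Γ)) := by
    rintro ⟨L, hL, hp⟩
    obtain ⟨L', hL', hc⟩ := extract L (fun χ hx => by
      rcases hL χ hx with h | h
      · exact Or.inl h
      · exact Or.inr h)
    have h1 : S4Point2 ((ψ.neg.conj (conjL L')).imp ModalFormula.falsum) :=
      prv_trans (conjL_cover hc) hp
    have t1 : S4Point2 (((ψ.neg.conj (conjL L')).imp ModalFormula.falsum).imp
        ((conjL L').imp ψ)) := by
      apply S4Point2.taut; intro e h0 h1
      simp only [ModalFormula.conj, ModalFormula.neg, h1, h0]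
      cases e ψ <;> cases e (conjL L') <;> rfl
    have h2 : S4Point2 ((conjL L').imp ψ) := S4Point2.mp t1 h1
    have h3 : S4Point2 ((conjL L').imp (ModalFormula.box (conjL L'))) :=
      boxedL fun χ hx => ⟨(hL' χ hx).choose, (hL' χ hx).choose_spec.1⟩
    have h4 : S4Point2 ((conjL L').imp (ModalFormula.box ψ)) :=
      prv_trans h3 (box_mono h2)
    exact h (hΓ.mem_of_sdrv ⟨L', fun χ hx => (hL' χ hx).choose_spec.2, h4⟩)
  obtain ⟨Δ, hsub, hΔ⟩ := lindenbaum hx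
  refine ⟨Δ, hΔ, fun χ hχ => hsub (Set.mem_insert_of_mem _ ⟨χ, rfl, hχ⟩), hsub (Set.mem_insert _ _)⟩

lemma directed {Γ Γ₁ Γ₂ : Set Frm} (hΓ : MCSet Γ) (hΓ₁ : MCSet Γ₁) (hΓ₂ : MCSet Γ₂)
    (h1 : ∀ χ, ModalFormula.box χ ∈ Γ → ModalFormula.box χ ∈ Γ₁)
    (h2 : ∀ χ, ModalFormula.box χ ∈ Γ → ModalFormula.box χ ∈ Γ₂) :
    ∃ Θ, MCSet Θ ∧ (∀ χ, ModalFormula.box χ ∈ Γ₁ → ModalFormula.box χ ∈ Θ) ∧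
      (∀ χ, ModalFormula.box χ ∈ Γ₂ → ModalFormula.box χ ∈ Θ) := by
  have hx : Con (boxset Γ₁ ∪ boxset Γ₂) := by
    rintro ⟨L, hL, hp⟩
    obtain ⟨L₁, L₂, hL₁, hL₂, hc⟩ := extract2 L (fun χ hx => hL χ hx)
    set c₁ := conjL L₁ with hc₁
    set c₂ := conjL L₂ with hc₂
    have himp : S4Point2 (c₁.imp c₂.neg) := by
      have h3 : S4Point2 ((c₁.conj c₂).imp ModalFormula.falsum) :=
        prv_trans (conjL_cover2 hc) hp
      have t2 : S4Point2 (((c₁.conj c₂).imp ModalFormula.falsum).imp (c₁.imp c₂.neg)) := by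
        apply S4Point2.taut; intro e h0 h1
        simp only [ModalFormula.conj, ModalFormula.neg, h1, h0]
        cases e c₁ <;> cases e c₂ <;> rfl
      exact S4Point2.mp t2 h3
    have hbc₁ : ModalFormula.box c₁ ∈ Γ₁ := hΓ₁.mem_of_sdrv
      ⟨L₁, fun χ hx => (hL₁ χ hx).choose_spec.2,
        boxedL fun χ hx => ⟨(hL₁ χ hx).choose, (hL₁ χ hx).choose_spec.1⟩⟩
    have hbc₂ : ModalFormula.box c₂ ∈ Γ₂ := hΓ₂.mem_of_sdrv
      ⟨L₂, fun χ hx => (hL₂ χ hx).choose_spec.2,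
        boxedL fun χ hx => ⟨(hL₂ χ hx).choose, (hL₂ χ hx).choose_spec.1⟩⟩
    -- ◇□c₁ ∈ Γ
    have hdia : (ModalFormula.box c₁).dia ∈ Γ := by
      by_contra hnd
      have := hΓ.neg_mem hnd
      -- neg (dia X) = neg (neg (box (neg X)))
      have hb : ModalFormula.box (ModalFormula.neg (ModalFormula.box c₁)) ∈ Γ :=
        hΓ.mem_prv_imp (prv_dne _) this
      have hb1 := h1 _ hb
      have hnb : ModalFormula.neg (ModalFormula.box c₁) ∈ Γ₁ :=
        hΓ₁.mem_prv_imp (S4Point2.axT _) hb1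
      exact hΓ₁.not_both hbc₁ hnb
    have hbd : ModalFormula.box c₁.dia ∈ Γ := hΓ.mem_prv_imp (S4Point2.ax2 c₁) hdia
    have hdΓ₂ : c₁.dia ∈ Γ₂ := hΓ₂.mem_prv_imp (S4Point2.axT _) (h2 _ hbd)
    have hdn : (c₂.neg).dia ∈ Γ₂ := hΓ₂.mem_prv_imp (dia_mono himp) hdΓ₂
    -- (c₂.neg).dia = neg (box (neg (neg c₂)))
    have hdd : ModalFormula.box (ModalFormula.neg (ModalFormula.neg c₂)) ∈ Γ₂ :=
      hΓ₂.mem_prv_imp (box_mono (prv_dni c₂)) hbc₂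
    exact hΓ₂.not_both hdd hdn
  obtain ⟨Θ, hsub, hΘ⟩ := lindenbaum hx
  exact ⟨Θ, hΘ, fun χ hχ => hsub (Or.inl ⟨χ, rfl, hχ⟩), fun χ hχ => hsub (Or.inr ⟨χ, rfl, hχ⟩)⟩

/-! subformulas -/

def subf : Frm → List Frm
  | .atom n => [.atom n]
  | .falsum => [.falsum]
  | .imp a b => .imp a b :: (subf a ++ subf b)
  | .box a => .box a :: subf a

lemma subf_self (ψ : Frm) : ψ ∈ subf ψ := by
  cases ψ <;> simp [subf]

lemma subf_imp {θ a b : Frm} (h : ModalFormula.imp a b ∈ subf θ) :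
    a ∈ subf θ ∧ b ∈ subf θ := by
  induction θ with
  | atom n => simp [subf] at h
  | falsum => simp [subf] at h
  | imp c d IHc IHd =>
    simp only [subf, List.mem_cons, List.mem_append] at h ⊢
    rcases h with h | h | h
    · obtain ⟨rfl, rfl⟩ := ModalFormula.imp.inj h
      exact ⟨Or.inr (Or.inl (subf_self a)), Or.inr (Or.inr (subf_self b))⟩
    · exact ⟨Or.inr (Or.inl (IHc h).1), Or.inr (Or.inl (IHc h).2)⟩
    · exact ⟨Or.inr (Or.inr (IHd h).1), Or.inr (Or.inr (IHd h).2)⟩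
  | box c IHc =>
    simp only [subf, List.mem_cons] at h ⊢
    rcases h with h | h
    · cases h
    · exact ⟨Or.inr (IHc h).1, Or.inr (IHc h).2⟩

lemma subf_box {θ a : Frm} (h : ModalFormula.box a ∈ subf θ) : a ∈ subf θ := by
  induction θ with
  | atom n => simp [subf] at h
  | falsum => simp [subf] at h
  | imp c d IHc IHd =>
    simp only [subf, List.mem_cons, List.mem_append] at h ⊢
    rcases h with h | h | h
    · cases h
    · exact Or.inr (Or.inl (IHc h))
    · exact Or.inr (Or.inr (IHd h))
  | box c IHc =>
    simp only [subf, List.mem_cons] at h ⊢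
    rcases h with h | h
    · obtain rfl := (ModalFormula.box.inj h)
      exact Or.inr (subf_self a)
    · exact Or.inr (IHc h)

end HL
namespace HL
open ModalFormula

section Filtration

variable (φ₀ : Frm) (Γ₀ : Set Frm)

/-- reachability from the root MCS -/
def RC (Γ Δ : Set Frm) : Prop := ∀ χ, ModalFormula.box χ ∈ Γ → ModalFormula.box χ ∈ Δ

/-- worlds of the filtrated model -/
def FW : Type :=
  {S : Set Frm // ∃ Γ : Set Frm, MCSet Γ ∧ RC Γ₀ Γ ∧ S = {ψ | ψ ∈ subf φ₀ ∧ ψ ∈ Γ}}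

instance FW_finite : Finite (FW φ₀ Γ₀) := by
  have hinj : Function.Injective
      (fun (S : FW φ₀ Γ₀) (i : Fin (subf φ₀).length) => ((subf φ₀).get i ∈ S.1 : Prop)) := by
    intro S S' h
    apply Subtype.ext
    ext ψ
    obtain ⟨Γ, hΓ, hR, hS⟩ := S.2
    obtain ⟨Γ', hΓ', hR', hS'⟩ := S'.2
    constructor
    · intro hψ
      have hσ : ψ ∈ subf φ₀ := by rw [hS] at hψ; exact hψ.1
      obtain ⟨i, hi⟩ := List.mem_iff_get.1 hσ
      have h2 := congrFun h i
      simp only [hi] at h2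
      exact h2 ▸ hψ
    · intro hψ
      have hσ : ψ ∈ subf φ₀ := by rw [hS'] at hψ; exact hψ.1
      obtain ⟨i, hi⟩ := List.mem_iff_get.1 hσ
      have h2 := congrFun h i
      simp only [hi] at h2
      exact h2 ▸ hψ
  exact Finite.of_injective _ hinj

/-- frame relation on the filtration -/
def RF (S S' : FW φ₀ Γ₀) : Prop :=
  ∀ ψ, ModalFormula.box ψ ∈ S.1 → (ModalFormula.box ψ ∈ S'.1 ∧ ψ ∈ S'.1)

/-- valuation on the filtration -/
def VF (k : ℕ) (S : FW φ₀ Γ₀) : Prop := ModalFormula.atom k ∈ S.1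

variable {φ₀ Γ₀}

/-- world represented by an MCS -/
def mkF {Γ : Set Frm} (hΓ : MCSet Γ) (hR : RC Γ₀ Γ) : FW φ₀ Γ₀ :=
  ⟨{ψ | ψ ∈ subf φ₀ ∧ ψ ∈ Γ}, Γ, hΓ, hR, rfl⟩

lemma RF_trans {S S' S'' : FW φ₀ Γ₀} (h : RF φ₀ Γ₀ S S') (h' : RF φ₀ Γ₀ S' S'') :
    RF φ₀ Γ₀ S S'' := fun ψ hψ => h' ψ (h ψ hψ).1

lemma RF_refl (S : FW φ₀ Γ₀) : RF φ₀ Γ₀ S S := by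
  intro ψ hψ
  obtain ⟨Γ, hΓ, hR, hS⟩ := S.2
  refine ⟨hψ, ?_⟩
  rw [hS] at hψ ⊢
  exact ⟨subf_box hψ.1, hΓ.mem_prv_imp (S4Point2.axT _) hψ.2⟩

lemma RF_of_RC {Γ Δ : Set Frm} (hΓ : MCSet Γ) (hRΓ : RC Γ₀ Γ) (hΔ : MCSet Δ)
    (hRΔ : RC Γ₀ Δ) (h : RC Γ Δ) : RF φ₀ Γ₀ (mkF hΓ hRΓ) (mkF hΔ hRΔ) := by
  intro ψ hψ
  obtain ⟨hσ, hm⟩ := hψ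
  have hbΔ : ModalFormula.box ψ ∈ Δ := h ψ hm
  exact ⟨⟨hσ, hbΔ⟩, ⟨subf_box hσ, hΔ.mem_prv_imp (S4Point2.axT _) hbΔ⟩⟩

/-- the truth lemma for the filtration -/
lemma truth_lemma (hΓ₀ : MCSet Γ₀) :
    ∀ ψ, ψ ∈ subf φ₀ → ∀ (Γ : Set Frm) (hΓ : MCSet Γ) (hR : RC Γ₀ Γ),
      (ModalSat (RF φ₀ Γ₀) (VF φ₀ Γ₀) (mkF hΓ hR) ψ ↔ ψ ∈ Γ) := by
  intro ψ
  induction ψ with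
  | atom n =>
    intro hσ Γ hΓ hR
    simp only [ModalSat, VF, mkF]
    exact ⟨fun h => h.2, fun h => ⟨hσ, h⟩⟩
  | falsum =>
    intro hσ Γ hΓ hR
    simp only [ModalSat]
    exact ⟨fun h => h.elim, fun h => hΓ.falsum_not_mem h⟩
  | imp a b IHa IHb =>
    intro hσ Γ hΓ hR
    obtain ⟨hσa, hσb⟩ := subf_imp hσ
    simp only [ModalSat]
    rw [IHa hσa Γ hΓ hR, IHb hσb Γ hΓ hR, hΓ.mem_imp_iff]
  | box a IHa =>
    intro hσ Γ hΓ hR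
    have hσa : a ∈ subf φ₀ := subf_box hσ
    simp only [ModalSat]
    constructor
    · intro h
      by_contra hb
      obtain ⟨Δ, hΔ, hRC, hneg⟩ := box_witness hΓ hb
      have hRΔ : RC Γ₀ Δ := fun χ hχ => hRC χ (hR χ hχ)
      have hsat := h (mkF hΔ hRΔ) (RF_of_RC hΓ hR hΔ hRΔ hRC)
      have : a ∈ Δ := (IHa hσa Δ hΔ hRΔ).1 hsat
      exact hΔ.not_both this hneg
    · intro h S' hS'
      obtain ⟨Δ, hΔ, hRΔ, hSΔ⟩ := S'.2
      have hmk : S' = mkF hΔ hRΔ := Subtype.ext hSΔ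
      have := (hS' a ⟨hσ, h⟩).2
      rw [hSΔ] at this
      rw [hmk]
      exact (IHa hσa Δ hΔ hRΔ).2 this.2

end Filtration

/-- The finite countermodel for a nontheorem of S4.2. -/
theorem countermodel (φ : Frm) (h : ¬ S4Point2 φ) :
    ∃ (F : Type) (_ : Fintype F) (R : F → F → Prop) (V : ℕ → F → Prop) (r : F),
      (∀ x, R x x) ∧ (∀ x y z, R x y → R y z → R x z) ∧
      (∀ x, R r x) ∧ (∀ x y, ∃ z, R x z ∧ R y z) ∧ ¬ ModalSat R V r φ := by
  have hcon : Con {φ.neg} := by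
    rintro ⟨L, hL, hp⟩
    have hL' : ∀ χ ∈ L, χ = φ.neg ∨ χ ∈ (∅ : Set Frm) := fun χ hx => Or.inl (hL χ hx)
    obtain ⟨L', hL'', hc⟩ := extract L hL'
    have : L' = [] := List.eq_nil_iff_forall_not_mem.2 (fun χ hx => (hL'' χ hx).elim)
    subst this
    have h1 : S4Point2 ((φ.neg.conj (conjL [])).imp ModalFormula.falsum) :=
      prv_trans (conjL_cover hc) hp
    have t3 : S4Point2 (((φ.neg.conj (conjL [])).imp ModalFormula.falsum).imp φ) := by
      apply S4Point2.taut; intro e h0 h1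
      simp only [conjL, ModalFormula.conj, ModalFormula.neg, h1, h0]
      cases e φ <;> rfl
    exact h (S4Point2.mp t3 h1)
  obtain ⟨Γ₀, hsub, hΓ₀⟩ := lindenbaum hcon
  have hroot : RC Γ₀ Γ₀ := fun χ hχ => hχ
  refine ⟨FW φ Γ₀, Fintype.ofFinite _, RF φ Γ₀, VF φ Γ₀, mkF hΓ₀ hroot,
    RF_refl, fun x y z => RF_trans, ?_, ?_, ?_⟩
  · -- rooted
    intro S
    obtain ⟨Γ, hΓ, hR, hS⟩ := S.2
    have : S = mkF hΓ hR := Subtype.ext hS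
    rw [this]
    exact RF_of_RC hΓ₀ hroot hΓ hR hR
  · -- directed
    intro S₁ S₂
    obtain ⟨Γ₁, hΓ₁, hR₁, hS₁⟩ := S₁.2
    obtain ⟨Γ₂, hΓ₂, hR₂, hS₂⟩ := S₂.2
    obtain ⟨Θ, hΘ, hc₁, hc₂⟩ := directed hΓ₀ hΓ₁ hΓ₂ hR₁ hR₂
    have hRΘ : RC Γ₀ Θ := fun χ hχ => hc₁ χ (hR₁ χ hχ)
    refine ⟨mkF hΘ hRΘ, ?_, ?_⟩
    · have : S₁ = mkF hΓ₁ hR₁ := Subtype.ext hS₁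
      rw [this]; exact RF_of_RC hΓ₁ hR₁ hΘ hRΘ hc₁
    · have : S₂ = mkF hΓ₂ hR₂ := Subtype.ext hS₂
      rw [this]; exact RF_of_RC hΓ₂ hR₂ hΘ hRΘ hc₂
  · -- refutation
    intro hsat
    have hφσ : φ ∈ subf φ := subf_self φ
    have := (truth_lemma hΓ₀ φ hφσ Γ₀ hΓ₀ hroot).1 hsat
    exact hΓ₀.not_both this (hsub rfl)

end HL
namespace HL
open Finset

section Cube
attribute [local instance] Classical.propDecidable

variable {F : Type} [Fintype F]

/-- enumeration of F -/
noncomputable def eF : Fin (Fintype.card F) ≃ F := (Fintype.equivFin F).symm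

/-- number of `true`s of a boolean vector -/
noncomputable def cnt {n : ℕ} (t : Fin n → Bool) : ℕ := (univ.filter (fun i => t i = true)).card

lemma cnt_exists {n : ℕ} (m : ℕ) (hm : m ≤ n) : ∃ t : Fin n → Bool, cnt t = m := by
  refine ⟨fun j => decide ((j : ℕ) < m), ?_⟩
  unfold cnt
  have h1 : (univ.filter (fun i : Fin n => (decide ((i : ℕ) < m)) = true)) =
      (univ.filter (fun i : Fin n => (i : ℕ) < m)) := by
    apply Finset.filter_congr; intro i _; simp
  rw [h1]
  clear h1
  induction m with
  | zero => simp
  | succ k IH =>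
    have hk : k ≤ n := Nat.le_of_succ_le hm
    have hkn : k < n := hm
    have hstep : (univ.filter (fun i : Fin n => (i : ℕ) < k + 1)) =
        insert (⟨k, hkn⟩ : Fin n) (univ.filter (fun i : Fin n => (i : ℕ) < k)) := by
      ext x
      simp only [Finset.mem_filter, Finset.mem_univ, true_and, Finset.mem_insert]
      constructor
      · intro hx
        rcases Nat.lt_succ_iff_lt_or_eq.1 hx with h | h
        · exact Or.inr h
        · exact Or.inl (Fin.ext h)
      · rintro (rfl | hx)
        · exact Nat.lt_succ_self k
        · exact Nat.lt_succ_of_lt hx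
    rw [hstep, Finset.card_insert_of_notMem (by simp), IH hk]

/-- pick an element of a nonempty finite set using a boolean vector -/
noncomputable def pick (c : Finset F) (hc : c.Nonempty) (t : Fin (Fintype.card F) → Bool) : F :=
  c.toList.get ⟨cnt t % c.toList.length,
    Nat.mod_lt _ (by rw [Finset.length_toList]; exact Finset.card_pos.2 hc)⟩

lemma pick_mem (c : Finset F) (hc : c.Nonempty) (t : Fin (Fintype.card F) → Bool) :
    pick c hc t ∈ c := by
  rw [← Finset.mem_toList]
  exact List.get_mem _ _

lemma pick_surj (c : Finset F) (hc : c.Nonempty) {q : F} (hq : q ∈ c) :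
    ∃ t, pick c hc t = q := by
  obtain ⟨i, hi⟩ := List.mem_iff_get.1 ((Finset.mem_toList).2 hq)
  have hlen : c.toList.length = c.card := Finset.length_toList c
  have hcard : c.card ≤ Fintype.card F := by
    rw [← Finset.card_univ]; exact Finset.card_le_card (Finset.subset_univ c)
  have hile : (i : ℕ) ≤ Fintype.card F := le_trans (le_of_lt (hlen ▸ i.2)) hcard
  obtain ⟨t, ht⟩ := cnt_exists (n := Fintype.card F) (i : ℕ) hile
  refine ⟨t, ?_⟩
  unfold pick
  have hmod : cnt t % c.toList.length = (i : ℕ) := by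
    rw [ht]; exact Nat.mod_eq_of_lt i.2
  simp only [hmod]
  rw [← hi]

variable (R : F → F → Prop) (root : F)

/-- the finite set of worlds named by a set of tokens, plus the root -/
noncomputable def BS (B : Finset (Fin (Fintype.card F))) : Finset F :=
  insert root (B.image (eF (F := F)))

def Chainy (c : Finset F) : Prop := ∀ x ∈ c, ∀ y ∈ c, R x y ∨ R y x

/-- maxima of a finite set -/
noncomputable def Mx (c : Finset F) : Finset F := c.filter (fun m => ∀ x ∈ c, R x m)

lemma chainy_max (hrefl : ∀ x, R x x) (htrans : ∀ x y z, R x y → R y z → R x z)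
    (c : Finset F) : Chainy R c → c.Nonempty → (Mx R c).Nonempty := by
  induction c using Finset.induction_on with
  | empty => intro _ h; simp at h
  | @insert a s ha IH =>
    intro hc _
    by_cases hs : s.Nonempty
    · have hcs : Chainy R s := fun x hx y hy =>
        hc x (Finset.mem_insert_of_mem hx) y (Finset.mem_insert_of_mem hy)
      obtain ⟨m, hm⟩ := IH hcs hs
      obtain ⟨hmem, hmax⟩ := Finset.mem_filter.1 hm
      rcases hc a (Finset.mem_insert_self a s) m (Finset.mem_insert_of_mem hmem) with h | h
      · refine ⟨m, Finset.mem_filter.2 ⟨Finset.mem_insert_of_mem hmem, ?_⟩⟩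
        intro x hx
        rcases Finset.mem_insert.1 hx with rfl | hx
        · exact h
        · exact hmax x hx
      · refine ⟨a, Finset.mem_filter.2 ⟨Finset.mem_insert_self a s, ?_⟩⟩
        intro x hx
        rcases Finset.mem_insert.1 hx with rfl | hx
        · exact hrefl x
        · exact htrans x m a (hmax x hx) h
    · rw [Finset.not_nonempty_iff_eq_empty] at hs
      subst hs
      refine ⟨a, Finset.mem_filter.2 ⟨Finset.mem_insert_self a _, ?_⟩⟩
      intro x hx
      rcases Finset.mem_insert.1 hx with rfl | hx
      · exact hrefl x
      · simp at hx

/-- the top cluster -/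
noncomputable def Tcl : Finset F := univ.filter (fun τ => ∀ x, R x τ)

lemma Tcl_nonempty (htrans : ∀ x y z, R x y → R y z → R x z)
    (hdir : ∀ x y, ∃ z, R x z ∧ R y z) (hroot : ∀ x, R root x) : (Tcl R).Nonempty := by
  have hub : ∀ s : Finset F, ∃ z, ∀ x ∈ s, R x z := by
    intro s
    induction s using Finset.induction_on with
    | empty => exact ⟨root, by simp⟩
    | @insert a s' ha IH =>
      obtain ⟨z, hz⟩ := IH
      obtain ⟨z', hz'1, hz'2⟩ := hdir a z
      refine ⟨z', fun x hx => ?_⟩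
      rcases Finset.mem_insert.1 hx with rfl | hx
      · exact hz'1
      · exact htrans x z z' (hz x hx) hz'2
  obtain ⟨z, hz⟩ := hub univ
  exact ⟨z, Finset.mem_filter.2 ⟨Finset.mem_univ z, fun x => hz x (Finset.mem_univ x)⟩⟩

variable (hrefl : ∀ x, R x x) (htrans : ∀ x y z, R x y → R y z → R x z)
  (hroot : ∀ x, R root x) (hdir : ∀ x y, ∃ z, R x z ∧ R y z)

/-- the cube-to-frame map -/
noncomputable def gmap (B : Finset (Fin (Fintype.card F))) (t : Fin (Fintype.card F) → Bool) : F :=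
  if h : Chainy R (BS root B) then
    pick (Mx R (BS root B)) (chainy_max R hrefl htrans _ h ⟨root, Finset.mem_insert_self _ _⟩) t
  else pick (Tcl R) (Tcl_nonempty R root htrans hdir hroot) t

lemma Tcl_mem {τ : F} (h : τ ∈ Tcl R) : ∀ x, R x τ := (Finset.mem_filter.1 h).2

lemma gmap_mem_Mx {B : Finset (Fin (Fintype.card F))} (t : Fin (Fintype.card F) → Bool)
    (hch : Chainy R (BS root B)) :
    gmap R root hrefl htrans hroot hdir B t ∈ Mx R (BS root B) := by
  unfold gmap; rw [dif_pos hch]; exact pick_mem _ _ _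

lemma gmap_mem_Tcl {B : Finset (Fin (Fintype.card F))} (t : Fin (Fintype.card F) → Bool)
    (hch : ¬ Chainy R (BS root B)) :
    gmap R root hrefl htrans hroot hdir B t ∈ Tcl R := by
  unfold gmap; rw [dif_neg hch]; exact pick_mem _ _ _

lemma gmap_mono {B B' : Finset (Fin (Fintype.card F))} (hBB : B ⊆ B')
    (t t' : Fin (Fintype.card F) → Bool) :
    R (gmap R root hrefl htrans hroot hdir B t) (gmap R root hrefl htrans hroot hdir B' t') := by
  have hsub : BS root B ⊆ BS (F := F) root B' :=
    Finset.insert_subset_insert _ (Finset.image_subset_image hBB)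
  by_cases h' : Chainy R (BS root B')
  · have h : Chainy R (BS root B) := fun x hx y hy => h' x (hsub hx) y (hsub hy)
    have h1 := gmap_mem_Mx R root hrefl htrans hroot hdir t h
    have h2 := gmap_mem_Mx R root hrefl htrans hroot hdir t' h'
    have h1m : gmap R root hrefl htrans hroot hdir B t ∈ BS root B := (Finset.mem_filter.1 h1).1
    exact (Finset.mem_filter.1 h2).2 _ (hsub h1m)
  · exact Tcl_mem R (gmap_mem_Tcl R root hrefl htrans hroot hdir t' h') _

lemma gmap_back {B : Finset (Fin (Fintype.card F))} {t : Fin (Fintype.card F) → Bool} {q' : F}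
    (h : R (gmap R root hrefl htrans hroot hdir B t) q') :
    ∃ B' t', B ⊆ B' ∧ gmap R root hrefl htrans hroot hdir B' t' = q' := by
  by_cases hch : Chainy R (BS root B)
  · have hqM := gmap_mem_Mx R root hrefl htrans hroot hdir t hch
    set q := gmap R root hrefl htrans hroot hdir B t with hq
    have hqmax : ∀ x ∈ BS root B, R x q := (Finset.mem_filter.1 hqM).2
    have hBS : BS (F := F) root (insert (eF.symm q') B) = insert q' (BS root B) := by
      unfold BS
      rw [Finset.image_insert, Equiv.apply_symm_apply]
      ext x; simp only [Finset.mem_insert, Finset.mem_image]; tauto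
    have hch' : Chainy R (BS root (insert (eF.symm q') B)) := by
      rw [hBS]
      intro x hx y hy
      rcases Finset.mem_insert.1 hx with hx1 | hx1
      · rcases Finset.mem_insert.1 hy with hy1 | hy1
        · rw [hx1, hy1]; exact Or.inl (hrefl _)
        · rw [hx1]; exact Or.inr (htrans y q q' (hqmax y hy1) h)
      · rcases Finset.mem_insert.1 hy with hy1 | hy1
        · rw [hy1]; exact Or.inl (htrans x q q' (hqmax x hx1) h)
        · exact hch x hx1 y hy1
    have hq'M : q' ∈ Mx R (BS root (insert (eF.symm q') B)) := by
      rw [hBS]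
      refine Finset.mem_filter.2 ⟨Finset.mem_insert_self _ _, ?_⟩
      intro x hx
      rcases Finset.mem_insert.1 hx with hx1 | hx1
      · rw [hx1]; exact hrefl _
      · exact htrans x q q' (hqmax x hx1) h
    obtain ⟨t', ht'⟩ := pick_surj (Mx R (BS root (insert (eF.symm q') B)))
      (chainy_max R hrefl htrans _ hch' ⟨root, Finset.mem_insert_self _ _⟩) hq'M
    refine ⟨insert (eF.symm q') B, t', Finset.subset_insert _ _, ?_⟩
    unfold gmap
    rw [dif_pos hch']
    exact ht'
  · have hqT := gmap_mem_Tcl R root hrefl htrans hroot hdir t hch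
    have hq'T : q' ∈ Tcl R := by
      refine Finset.mem_filter.2 ⟨Finset.mem_univ _, fun x => ?_⟩
      exact htrans x _ q' (Tcl_mem R hqT x) h
    obtain ⟨t', ht'⟩ := pick_surj (Tcl R) (Tcl_nonempty R root htrans hdir hroot) hq'T
    refine ⟨B, t', subset_rfl, ?_⟩
    unfold gmap
    rw [dif_neg hch]
    exact ht'

lemma gmap_empty (t : Fin (Fintype.card F) → Bool) :
    gmap R root hrefl htrans hroot hdir ∅ t = root := by
  have hBS : BS (F := F) root ∅ = {root} := by
    unfold BS; rw [Finset.image_empty]; rfl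
  have hch : Chainy R (BS root ∅) := by
    rw [hBS]; intro x hx y hy
    simp only [Finset.mem_singleton] at hx hy
    rw [hx, hy]; exact Or.inl (hrefl root)
  have hmem := gmap_mem_Mx R root hrefl htrans hroot hdir (B := ∅) t hch
  have hMsub : Mx R (BS root ∅) ⊆ {root} := by
    intro x hx
    have := (Finset.mem_filter.1 hx).1
    rw [hBS] at this
    exact this
  exact Finset.mem_singleton.1 (hMsub hmem)

end Cube
end HL
section Potentialist
variable {W : Type*} [Preorder W]

/-- A predicate on worlds is persistent if once true it stays true in all
larger worlds. -/
def Persistent (b : W → Prop) : Prop := ∀ w v : W, b w → w ≤ v → b v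

/-- A button: a persistent predicate that can always be made true. -/
def IsButton (b : W → Prop) : Prop :=
  Persistent b ∧ ∀ w : W, ∃ v, w ≤ v ∧ b v

/-- A switch: a predicate that can always be made true and can always be made
false. -/
def IsSwitch (s : W → Prop) : Prop :=
  ∀ w : W, (∃ v, w ≤ v ∧ s v) ∧ (∃ v, w ≤ v ∧ ¬ s v)

/-- A family of `n` buttons and `n` switches is independent at `w₀` if no
button is pushed at `w₀` and, from any world above `w₀`, the buttons and
switches can be set in any pattern extending the already-pushed buttons. -/
def IndependentFamily (n : ℕ) (b s : Fin n → W → Prop) (w₀ : W) : Prop :=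
  (∀ i, ¬ b i w₀) ∧
  ∀ w, w₀ ≤ w → ∀ B : Set (Fin n), {i | b i w} ⊆ B → ∀ t : Fin n → Bool,
    ∃ u, w ≤ u ∧ (∀ i, b i u ↔ i ∈ B) ∧ (∀ j, s j u ↔ t j = true)

/-- Pointwise finite Boolean combinations of a family of predicates. -/
inductive BoolComb (F : Set (W → Prop)) : (W → Prop) → Prop
  | base {p} : p ∈ F → BoolComb F p
  | top : BoolComb F (fun _ => True)
  | compl {p} : BoolComb F p → BoolComb F (fun w => ¬ p w)
  | inter {p q} : BoolComb F p → BoolComb F q →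
      BoolComb F (fun w => p w ∧ q w)

namespace HL
section Transfer
attribute [local instance] Classical.propDecidable
open Finset

variable {W : Type*} [Preorder W]

lemma bcCongr {Fam : Set (W → Prop)} {p q : W → Prop} (h : BoolComb Fam p)
    (hpq : ∀ w, p w ↔ q w) : BoolComb Fam q := by
  have : p = q := funext fun w => propext (hpq w)
  exact this ▸ h

lemma bcConst {Fam : Set (W → Prop)} (c : Prop) : BoolComb Fam (fun _ => c) := by
  by_cases hc : c
  · exact bcCongr BoolComb.top (fun w => by simp [hc])
  · exact bcCongr (BoolComb.compl BoolComb.top) (fun w => by simp [hc])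

def andL (L : List (W → Prop)) : W → Prop := L.foldr (fun p q w => p w ∧ q w) (fun _ => True)

lemma andL_boolcomb {Fam : Set (W → Prop)} : ∀ {L : List (W → Prop)},
    (∀ p ∈ L, BoolComb Fam p) → BoolComb Fam (andL L)
  | [], _ => BoolComb.top
  | p :: L, h =>
    BoolComb.inter (h p (by simp)) (andL_boolcomb fun q hq => h q (by simp [hq]))

lemma andL_iff : ∀ (L : List (W → Prop)) (w : W), andL L w ↔ ∀ p ∈ L, p w
  | [], w => by simp [andL]
  | p :: L, w => by
    simp only [andL, List.foldr_cons, List.mem_cons]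
    rw [show (List.foldr (fun p q w => p w ∧ q w) (fun _ => True) L) = andL L from rfl]
    rw [andL_iff L w]
    constructor
    · rintro ⟨h1, h2⟩ q (rfl | hq)
      · exact h1
      · exact h2 q hq
    · intro h
      exact ⟨h p (Or.inl rfl), fun q hq => h q (Or.inr hq)⟩

def orL (L : List (W → Prop)) : W → Prop := L.foldr (fun p q w => p w ∨ q w) (fun _ => False)

lemma orL_boolcomb {Fam : Set (W → Prop)} : ∀ {L : List (W → Prop)},
    (∀ p ∈ L, BoolComb Fam p) → BoolComb Fam (orL L)
  | [], _ => bcConst False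
  | p :: L, h => by
    have hp := h p (by simp)
    have hL := orL_boolcomb (L := L) fun q hq => h q (by simp [hq])
    exact bcCongr (BoolComb.compl (BoolComb.inter (BoolComb.compl hp) (BoolComb.compl hL)))
      (fun w => by
        show ¬(¬ p w ∧ ¬ orL L w) ↔ _
        constructor
        · intro hn
          by_cases h1 : p w
          · exact Or.inl h1
          · by_cases h2 : orL L w
            · exact Or.inr h2
            · exact absurd ⟨h1, h2⟩ hn
        · rintro (h1 | h2) ⟨hn1, hn2⟩
          · exact hn1 h1
          · exact hn2 h2)

lemma orL_iff : ∀ (L : List (W → Prop)) (w : W), orL L w ↔ ∃ p ∈ L, p w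
  | [], w => by simp [orL]
  | p :: L, w => by
    simp only [orL, List.foldr_cons, List.mem_cons]
    rw [show (List.foldr (fun p q w => p w ∨ q w) (fun _ => False) L) = orL L from rfl]
    rw [orL_iff L w]
    constructor
    · rintro (h1 | ⟨q, hq, hqw⟩)
      · exact ⟨p, Or.inl rfl, h1⟩
      · exact ⟨q, Or.inr hq, hqw⟩
    · rintro ⟨q, (rfl | hq), hqw⟩
      · exact Or.inl hqw
      · exact Or.inr ⟨q, hq, hqw⟩

variable {F : Type} [Fintype F] (R : F → F → Prop) (root : F)
  (hrefl : ∀ x, R x x) (htrans : ∀ x y z, R x y → R y z → R x z)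
  (hroot : ∀ x, R root x) (hdir : ∀ x y, ∃ z, R x z ∧ R y z)
  (b s : Fin (Fintype.card F) → W → Prop)

/-- the set of pushed buttons at a world -/
noncomputable def PBw (w : W) : Finset (Fin (Fintype.card F)) := univ.filter (fun i => b i w)

/-- the switch pattern at a world -/
noncomputable def tpw (w : W) : Fin (Fintype.card F) → Bool := fun j => decide (s j w)

/-- the induced labelling of worlds by elements of F -/
noncomputable def Gw (w : W) : F :=
  gmap R root hrefl htrans hroot hdir (PBw (F := F) b w) (tpw (F := F) s w)

lemma boolcomb_of_pattern (P : Finset (Fin (Fintype.card F)) × (Fin (Fintype.card F) → Bool) → Prop) :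
    BoolComb (Set.range b ∪ Set.range s)
      (fun w => P (PBw (F := F) b w, tpw (F := F) s w)) := by
  classical
  set pl := (univ : Finset ((Finset (Fin (Fintype.card F))) × ((Fin (Fintype.card F)) → Bool))).toList with hpl
  set comp : (Finset (Fin (Fintype.card F))) × ((Fin (Fintype.card F)) → Bool) → W → Prop :=
    fun π w => P π ∧ (∀ i, i ∈ π.1 ↔ b i w) ∧ (∀ j, π.2 j = true ↔ s j w) with hcomp
  have hBCcomp : ∀ π, BoolComb (Set.range b ∪ Set.range s) (comp π) := by
    intro π
    refine BoolComb.inter (bcConst (P π)) (BoolComb.inter ?_ ?_)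
    · have : BoolComb (Set.range b ∪ Set.range s)
          (andL ((List.finRange (Fintype.card F)).map (fun i => fun w => (i ∈ π.1 ↔ b i w)))) := by
        refine andL_boolcomb ?_
        intro p hp
        obtain ⟨i, _, rfl⟩ := List.mem_map.1 hp
        by_cases hi : i ∈ π.1
        · exact bcCongr (BoolComb.base (Or.inl ⟨i, rfl⟩)) (fun w => by simp [hi])
        · exact bcCongr (BoolComb.compl (BoolComb.base (Or.inl ⟨i, rfl⟩))) (fun w => by simp [hi])
      refine bcCongr this (fun w => ?_)
      rw [andL_iff]
      constructor
      · intro h i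
        exact h _ (List.mem_map.2 ⟨i, List.mem_finRange i, rfl⟩)
      · intro h p hp
        obtain ⟨i, _, rfl⟩ := List.mem_map.1 hp
        exact h i
    · have : BoolComb (Set.range b ∪ Set.range s)
          (andL ((List.finRange (Fintype.card F)).map (fun j => fun w => (π.2 j = true ↔ s j w)))) := by
        refine andL_boolcomb ?_
        intro p hp
        obtain ⟨j, _, rfl⟩ := List.mem_map.1 hp
        by_cases hj : π.2 j = true
        · exact bcCongr (BoolComb.base (Or.inr ⟨j, rfl⟩)) (fun w => by simp [hj])
        · exact bcCongr (BoolComb.compl (BoolComb.base (Or.inr ⟨j, rfl⟩))) (fun w => by simp [hj])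
      refine bcCongr this (fun w => ?_)
      rw [andL_iff]
      constructor
      · intro h j
        exact h _ (List.mem_map.2 ⟨j, List.mem_finRange j, rfl⟩)
      · intro h p hp
        obtain ⟨j, _, rfl⟩ := List.mem_map.1 hp
        exact h j
  refine bcCongr (orL_boolcomb (L := pl.map comp) ?_) ?_
  · intro p hp
    obtain ⟨π, _, rfl⟩ := List.mem_map.1 hp
    exact hBCcomp π
  · intro w
    rw [orL_iff]
    constructor
    · rintro ⟨p, hp, hpw⟩
      obtain ⟨π, _, rfl⟩ := List.mem_map.1 hp
      obtain ⟨hP, hB, hT⟩ := hpw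
      have h1 : PBw (F := F) b w = π.1 := by
        ext i
        simp only [PBw, Finset.mem_filter, Finset.mem_univ, true_and]
        exact (hB i).symm
      have h2 : tpw (F := F) s w = π.2 := by
        funext j
        have := hT j
        cases hj : π.2 j
        · rw [hj] at this
          simp only [Bool.false_eq_true, false_iff] at this
          simp [tpw, this]
        · rw [hj] at this
          simp only [true_iff] at this
          simp [tpw, this]
      rw [h1, h2]
      exact hP
    · intro hP
      refine ⟨comp (PBw (F := F) b w, tpw (F := F) s w), List.mem_map.2
        ⟨(PBw (F := F) b w, tpw (F := F) s w), Finset.mem_toList.2 (Finset.mem_univ _), rfl⟩, ?_⟩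
      refine ⟨hP, ?_, ?_⟩
      · intro i
        simp [PBw]
      · intro j
        simp [tpw]

lemma sat_transfer (VF : ℕ → F → Prop) (w₀ : W) (hbp : ∀ i, Persistent (b i))
    (hind : IndependentFamily (Fintype.card F) b s w₀) :
    ∀ (ψ : ModalFormula) (w : W), w₀ ≤ w →
      (ModalSat (· ≤ ·) (fun k w => VF k (Gw R root hrefl htrans hroot hdir b s w)) w ψ ↔
        ModalSat R VF (Gw R root hrefl htrans hroot hdir b s w) ψ) := by
  intro ψ
  induction ψ with
  | atom n => intro w hw; simp [ModalSat]
  | falsum => intro w hw; simp [ModalSat]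
  | imp a c IHa IHc =>
    intro w hw
    simp only [ModalSat]
    rw [IHa w hw, IHc w hw]
  | box a IHa =>
    intro w hw
    simp only [ModalSat]
    constructor
    · intro h S' hS'
      obtain ⟨B', t', hBB, hgt⟩ := gmap_back R root hrefl htrans hroot hdir hS'
      have hsub : {i | b i w} ⊆ (↑B' : Set (Fin (Fintype.card F))) := by
        intro i hi
        exact hBB (by simp only [PBw, Finset.mem_filter, Finset.mem_univ, true_and]; exact hi)
      obtain ⟨u, hwu, hbu, hsu⟩ := hind.2 w hw (↑B') hsub t'
      have hPBu : PBw (F := F) b u = B' := by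
        ext i
        simp only [PBw, Finset.mem_filter, Finset.mem_univ, true_and]
        rw [hbu i]
        simp
      have htpu : tpw (F := F) s u = t' := by
        funext j
        have := hsu j
        cases hj : t' j
        · rw [hj] at this
          simp only [Bool.false_eq_true, iff_false] at this
          simp [tpw, this]
        · rw [hj] at this
          simp only [iff_true] at this
          simp [tpw, this]
      have hGu : Gw R root hrefl htrans hroot hdir b s u = S' := by
        unfold Gw
        rw [hPBu, htpu, hgt]
      have hsatu := h u hwu
      rw [IHa u (le_trans hw hwu)] at hsatu
      rwa [hGu] at hsatu
    · intro h v hv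
      have hmono : R (Gw R root hrefl htrans hroot hdir b s w)
          (Gw R root hrefl htrans hroot hdir b s v) := by
        unfold Gw
        apply gmap_mono
        intro i hi
        simp only [PBw, Finset.mem_filter, Finset.mem_univ, true_and] at hi ⊢
        exact hbp i w v hi hv
      have := h _ hmono
      rw [IHa v (le_trans hw hv)]
      exact this

end Transfer
end HL
/-- Hamkins–Löwe: if a potentialist frame admits, for each `n`, an
independent family of `n` buttons and `n` switches, then any modal formula
valid at every world under all valuations by Boolean combinations of these
families belongs to S4.2. -/
theorem buttons_and_switches_give_S4Point2
    (b s : (n : ℕ) → Fin n → W → Prop) (w₀ : ℕ → W)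
    (hb : ∀ n i, IsButton (b n i)) (hs : ∀ n j, IsSwitch (s n j))
    (hind : ∀ n, IndependentFamily n (b n) (s n) (w₀ n))
    (φ : ModalFormula)
    (hφ : ∀ (n : ℕ) (V : ℕ → W → Prop),
      (∀ k, BoolComb (Set.range (b n) ∪ Set.range (s n)) (V k)) →
      ∀ w : W, ModalSat (· ≤ ·) V w φ) :
    S4Point2 φ := by
  classical
  by_contra hns
  obtain ⟨F, hF, R, VF, r, hrefl, htrans, hroot, hdir, hnsat⟩ := HL.countermodel φ hns
  haveI := hF
  have hbp : ∀ i, Persistent (b (Fintype.card F) i) := fun i => (hb _ i).1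
  have hi := hind (Fintype.card F)
  obtain ⟨u, hwu, hbu, hsu⟩ := hi.2 (w₀ (Fintype.card F)) le_rfl
    (∅ : Set (Fin (Fintype.card F))) (fun i hi2 => (hi.1 i hi2).elim) (fun _ => true)
  have hPBu : HL.PBw (F := F) (b (Fintype.card F)) u = ∅ := by
    ext i
    simp only [HL.PBw, Finset.mem_filter, Finset.mem_univ, true_and,
      Finset.notMem_empty, iff_false]
    intro hbi
    exact absurd ((hbu i).1 hbi) (Set.notMem_empty i)
  have hGu : HL.Gw R r hrefl htrans hroot hdir (b (Fintype.card F)) (s (Fintype.card F)) u = r := by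
    unfold HL.Gw
    rw [hPBu]
    exact HL.gmap_empty R r hrefl htrans hroot hdir _
  have hsat := hφ (Fintype.card F)
    (fun k w => VF k (HL.Gw R r hrefl htrans hroot hdir (b (Fintype.card F)) (s (Fintype.card F)) w))
    (fun k => HL.boolcomb_of_pattern (b (Fintype.card F)) (s (Fintype.card F))
      (fun π => VF k (HL.gmap R r hrefl htrans hroot hdir π.1 π.2))) u
  have htr := HL.sat_transfer R r hrefl htrans hroot hdir (b (Fintype.card F)) (s (Fintype.card F))
    VF (w₀ (Fintype.card F)) hbp hi φ u hwu
  rw [hGu] at htr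
  exact hnsat (htr.1 hsat)

end Potentialist
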